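/- Let α, σ², W, ξ > 0. Then ∫_0^∞ W·log₂(1 + (α g/σ²)·max(ξ − σ²/(α g), 0))·e^{−g} dg = (W/ln 2)·E₁(σ²/(α ξ)), where E₁(x) = ∫_x^∞ e^{−t}/t dt. -/

import Mathlib

set_option maxHeartbeats 1000000


open MeasureTheory Set

/-- The exponential integral function `E₁(x) = ∫_x^∞ e^{−t}/t dt`. -/
noncomputable def expIntegralE1 (x : ℝ) : ℝ := ∫ t in Ioi x, Real.exp (-t) / t

lemma aux_log_le (x : ℝ) (hx : 0 < x) : |Real.log x| ≤ x + x⁻¹ := by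
  rcases le_or_gt 1 x with h | h
  · rw [abs_of_nonneg (Real.log_nonneg h)]
    have := Real.log_le_sub_one_of_pos hx
    have : 0 < x⁻¹ := inv_pos.mpr hx
    linarith [Real.log_le_sub_one_of_pos hx]
  · rw [abs_of_nonpos (Real.log_nonpos hx.le h.le), ← Real.log_inv]
    have h1 : 0 < x⁻¹ := inv_pos.mpr hx
    linarith [Real.log_le_sub_one_of_pos h1]

lemma aux_mul_exp (x : ℝ) : x * Real.exp (-x) ≤ 2 * Real.exp (-(1/2) * x) := by
  have h1 : x / 2 + 1 ≤ Real.exp (x / 2) := Real.add_one_le_exp _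
  have h2 : x ≤ 2 * Real.exp (x / 2) := by linarith
  have h3 : (0:ℝ) < Real.exp (-x) := Real.exp_pos _
  calc x * Real.exp (-x) ≤ 2 * Real.exp (x / 2) * Real.exp (-x) := by nlinarith
    _ = 2 * Real.exp (-(1/2) * x) := by rw [mul_assoc, ← Real.exp_add]; ring_nf

lemma intOn_c_exp (a C : ℝ) {b : ℝ} (hb : 0 < b) :
    IntegrableOn (fun x => C * Real.exp (-b * x)) (Ioi a) :=
  (exp_neg_integrableOn_Ioi a hb).const_mul C

lemma int_log_exp (c d : ℝ) (hc : 0 < c) :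
    IntegrableOn (fun g => (Real.log g - d) * Real.exp (-g)) (Ioi c) := by
  have hb : (0:ℝ) < 1/2 := by norm_num
  refine (intOn_c_exp c (2 + c⁻¹ + |d|) hb).mono'
    (((Real.measurable_log.sub measurable_const).mul
      (Real.measurable_exp.comp measurable_neg)).aestronglyMeasurable) ?_
  filter_upwards [ae_restrict_mem measurableSet_Ioi] with x hx
  have hx0 : 0 < x := hc.trans hx
  have he : (0:ℝ) < Real.exp (-x) := Real.exp_pos _
  have hinv : x⁻¹ ≤ c⁻¹ := inv_anti₀ hc hx.le
  have h1 : |Real.log x| ≤ x + x⁻¹ := aux_log_le x hx0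
  have h2 : |(Real.log x - d) * Real.exp (-x)| ≤ (|Real.log x| + |d|) * Real.exp (-x) := by
    rw [abs_mul, abs_of_pos he]
    gcongr
    exact abs_sub _ _
  have h3 : (|Real.log x| + |d|) * Real.exp (-x)
      ≤ x * Real.exp (-x) + (c⁻¹ + |d|) * Real.exp (-x) := by nlinarith
  have h4 : Real.exp (-x) ≤ Real.exp (-(1/2) * x) := by
    apply Real.exp_le_exp.mpr; linarith
  have h5 : x * Real.exp (-x) ≤ 2 * Real.exp (-(1/2) * x) := aux_mul_exp x
  have h6 : (c⁻¹ + |d|) * Real.exp (-x) ≤ (c⁻¹ + |d|) * Real.exp (-(1/2) * x) := by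
    have hpos : 0 ≤ c⁻¹ + |d| := by positivity
    nlinarith
  calc |(Real.log x - d) * Real.exp (-x)| ≤ x * Real.exp (-x) + (c⁻¹ + |d|) * Real.exp (-x) :=
        h2.trans h3
    _ ≤ 2 * Real.exp (-(1/2) * x) + (c⁻¹ + |d|) * Real.exp (-(1/2) * x) := by linarith
    _ = (2 + c⁻¹ + |d|) * Real.exp (-(1/2) * x) := by ring

lemma int_exp_div (c : ℝ) (hc : 0 < c) :
    IntegrableOn (fun g => Real.exp (-g) / g) (Ioi c) := by
  refine (intOn_c_exp c c⁻¹ one_pos).mono'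
    (((Real.measurable_exp.comp measurable_neg).div measurable_id).aestronglyMeasurable) ?_
  filter_upwards [ae_restrict_mem measurableSet_Ioi] with x hx
  have hx0 : 0 < x := hc.trans hx
  have he : (0:ℝ) < Real.exp (-x) := Real.exp_pos _
  rw [Real.norm_eq_abs, abs_of_pos (by positivity)]
  have hx1 : Real.exp (-1 * x) = Real.exp (-x) := by norm_num
  rw [hx1, div_le_iff₀ hx0, inv_mul_eq_div, div_mul_eq_mul_div, le_div_iff₀ hc]
  have hcx : c < x := hx
  nlinarith

lemma key_integral (c : ℝ) (hc : 0 < c) :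
    ∫ g in Ioi c, (Real.log g - Real.log c) * Real.exp (-g)
      = ∫ g in Ioi c, Real.exp (-g) / g := by
  set F : ℝ → ℝ := fun g => (Real.log g - Real.log c) * (-Real.exp (-g)) with hF
  set f' : ℝ → ℝ := fun x => (Real.log x - Real.log c) * Real.exp (-x) - Real.exp (-x) / x
    with hf'
  have hderiv : ∀ x ∈ Ioi c, HasDerivAt F (f' x) x := by
    intro x hx
    have hx0 : 0 < x := hc.trans hx
    have h1 : HasDerivAt (fun g : ℝ => Real.log g - Real.log c) x⁻¹ x :=
      (Real.hasDerivAt_log hx0.ne').sub_const _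
    have h2 : HasDerivAt (fun g : ℝ => -Real.exp (-g)) (Real.exp (-x)) x := by
      have := ((Real.hasDerivAt_exp (-x)).comp x (hasDerivAt_neg x)).neg
      exact this.congr_deriv (by ring)
    have := h1.mul h2
    refine this.congr_deriv ?_
    simp only [hf', hF]
    field_simp
    ring
  have hcont : ContinuousWithinAt F (Ici c) c := by
    apply ContinuousAt.continuousWithinAt
    exact (((Real.continuousAt_log hc.ne').sub continuousAt_const).mul
      ((Real.continuous_exp.continuousAt.comp continuousAt_neg).neg))
  have hI1 : IntegrableOn (fun g => (Real.log g - Real.log c) * Real.exp (-g)) (Ioi c) :=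
    int_log_exp c _ hc
  have hI2 : IntegrableOn (fun g => Real.exp (-g) / g) (Ioi c) := int_exp_div c hc
  have hint : IntegrableOn f' (Ioi c) := hI1.sub hI2
  have htend : Filter.Tendsto F Filter.atTop (nhds 0) := by
    have t1 : Filter.Tendsto (fun x : ℝ => x * Real.exp (-x)) Filter.atTop (nhds 0) := by
      have := Real.tendsto_pow_mul_exp_neg_atTop_nhds_zero 1
      simpa using this
    have t2 : Filter.Tendsto (fun x : ℝ => Real.log x * Real.exp (-x)) Filter.atTop (nhds 0) := by
      apply squeeze_zero' (g := fun x : ℝ => x * Real.exp (-x))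
      · filter_upwards [Filter.eventually_ge_atTop (1:ℝ)] with x hx
        exact mul_nonneg (Real.log_nonneg hx) (Real.exp_pos _).le
      · filter_upwards [Filter.eventually_ge_atTop (1:ℝ)] with x hx
        have h1 : Real.log x ≤ x := (Real.log_le_sub_one_of_pos (by linarith)).trans (by linarith)
        exact mul_le_mul_of_nonneg_right h1 (Real.exp_pos _).le
      · exact t1
    have t3 : Filter.Tendsto (fun x : ℝ => Real.log c * Real.exp (-x)) Filter.atTop (nhds 0) := by
      have := Real.tendsto_exp_neg_atTop_nhds_zero.const_mul (Real.log c)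
      simpa using this
    have : F = fun x => -(Real.log x * Real.exp (-x)) + Real.log c * Real.exp (-x) := by
      funext x; simp only [hF]; ring
    rw [this]
    have := t2.neg.add t3
    simpa using this
  have hkey : ∫ x in Ioi c, f' x = 0 - F c := by
    exact integral_Ioi_of_hasDerivAt_of_tendsto hcont hderiv hint htend
  have hFc : F c = 0 := by simp [hF]
  rw [hFc, sub_zero] at hkey
  have : ∫ x in Ioi c, f' x
      = (∫ g in Ioi c, (Real.log g - Real.log c) * Real.exp (-g))
        - ∫ g in Ioi c, Real.exp (-g) / g := integral_sub hI1 hI2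
  rw [this] at hkey
  linarith

/-- **Core computation of Corollary 1.** Under Rayleigh fading (density `e^{−g}` on `(0,∞)`),
the average rate of the uncapped water-filling policy with water level `ξ` is
`(W/ln 2)·E₁(σ²/(α ξ))`. -/
theorem rayleigh_waterfilling_average_rate (α σ2 W ξ : ℝ)
    (hα : 0 < α) (hσ2 : 0 < σ2) (hW : 0 < W) (hξ : 0 < ξ) :
    ∫ g in Ioi (0 : ℝ),
        W * Real.logb 2 (1 + (α * g / σ2) * max (ξ - σ2 / (α * g)) 0) * Real.exp (-g)
      = (W / Real.log 2) * expIntegralE1 (σ2 / (α * ξ)) := by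
  set c : ℝ := σ2 / (α * ξ) with hcdef
  have hc : 0 < c := div_pos hσ2 (mul_pos hα hξ)
  have hpt : ∀ g ∈ Ioi (0:ℝ),
      W * Real.logb 2 (1 + (α * g / σ2) * max (ξ - σ2 / (α * g)) 0) * Real.exp (-g)
        = (Ioi c).indicator
            (fun g => (W / Real.log 2) * ((Real.log g - Real.log c) * Real.exp (-g))) g := by
    intro g hg
    have hg0 : (0:ℝ) < g := hg
    rcases le_or_gt g c with h | h
    · rw [indicator_of_notMem (by simpa using not_lt.mpr h)]
      have h1 : ξ ≤ σ2 / (α * g) := by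
        rw [le_div_iff₀ (mul_pos hα hg0)]
        have h2 : g * (α * ξ) ≤ σ2 := by
          have := (le_div_iff₀ (mul_pos hα hξ)).mp h
          linarith
        nlinarith
      have hmax : max (ξ - σ2 / (α * g)) 0 = 0 := max_eq_right (by linarith)
      rw [hmax]
      simp
    · rw [indicator_of_mem (by simpa using h)]
      have h1 : σ2 / (α * g) ≤ ξ := by
        rw [div_le_iff₀ (mul_pos hα hg0)]
        have h2 : σ2 ≤ g * (α * ξ) := by
          have := (div_lt_iff₀ (mul_pos hα hξ)).mp h
          linarith
        nlinarith
      have hmax : max (ξ - σ2 / (α * g)) 0 = ξ - σ2 / (α * g) := max_eq_left (by linarith)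
      rw [hmax]
      have harg : 1 + (α * g / σ2) * (ξ - σ2 / (α * g)) = g / c := by
        rw [hcdef]
        field_simp
        ring
      rw [harg, Real.logb, Real.log_div hg0.ne' hc.ne']
      ring
  calc ∫ g in Ioi (0:ℝ),
          W * Real.logb 2 (1 + (α * g / σ2) * max (ξ - σ2 / (α * g)) 0) * Real.exp (-g)
      = ∫ g in Ioi (0:ℝ), (Ioi c).indicator
            (fun g => (W / Real.log 2) * ((Real.log g - Real.log c) * Real.exp (-g))) g :=
        setIntegral_congr_fun measurableSet_Ioi hpt
    _ = ∫ g in Ioi (0:ℝ) ∩ Ioi c,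
            (W / Real.log 2) * ((Real.log g - Real.log c) * Real.exp (-g)) :=
        setIntegral_indicator measurableSet_Ioi
    _ = ∫ g in Ioi c, (W / Real.log 2) * ((Real.log g - Real.log c) * Real.exp (-g)) := by
        rw [Set.Ioi_inter_Ioi, max_eq_right hc.le]
    _ = (W / Real.log 2) * ∫ g in Ioi c, (Real.log g - Real.log c) * Real.exp (-g) :=
        integral_const_mul _ _
    _ = (W / Real.log 2) * expIntegralE1 c := by
        rw [key_integral c hc, expIntegralE1]
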